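/- Let f_90 be the local rule f_90(a,b,c) = a + c. For every integer n ≥ 1, neither the free-boundary transition function (f_90)_{(n),*-*} nor the cyclic-boundary transition function (f_90)_{(n),*} on Q^n is bijective; that is, CA-90_{*-*}(n) and CA-90_{*}(n) are not reversible for any positive integer n. -/
import Mathlib


/-- The state set `Q = {0,1}` as `ZMod 2`. -/
abbrev Q : Type := ZMod 2

/-- A triplet local rule `f : Q³ → Q`. -/
abbrev Rule : Type := Q → Q → Q → Q

/-- A configuration of length `n`. -/
abbrev Config (n : ℕ) : Type := Fin n → Q

/-- The transition sending `x` to the word whose `i`-th letter is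
`f (x (i-1)) (x i) (x (i+1))`, where the virtual boundary letters
`x₀` and `x_{n+1}` are given as `x0` and `xn1`. -/
def caTrans {n : ℕ} (f : Rule) (x0 xn1 : Q) (x : Config n) : Config n :=
  fun i =>
    f (if _h : i.1 = 0 then x0
       else x ⟨i.1 - 1, Nat.lt_of_le_of_lt (Nat.sub_le _ _) i.isLt⟩)
      (x i)
      (if h : i.1 + 1 < n then x ⟨i.1 + 1, h⟩ else xn1)

/-- The first letter `x₁` of a nonempty configuration. -/
def firstCell {n : ℕ} (hn : 0 < n) (x : Config n) : Q := x ⟨0, hn⟩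

/-- The last letter `xₙ` of a nonempty configuration. -/
def lastCell {n : ℕ} (hn : 0 < n) (x : Config n) : Q :=
  x ⟨n - 1, Nat.sub_lt hn Nat.one_pos⟩

/-- Fixed boundary `a-b` : `x₀ = a`, `x_{n+1} = b`. -/
def fixedBC {n : ℕ} (f : Rule) (a b : Q) : Config n → Config n :=
  fun x => caTrans f a b x

/-- Boundary `a-*` : `x₀ = a`, `x_{n+1} = xₙ`. -/
def leftFixedBC {n : ℕ} (hn : 0 < n) (f : Rule) (a : Q) : Config n → Config n :=
  fun x => caTrans f a (lastCell hn x) x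

/-- Boundary `*-b` : `x₀ = x₁`, `x_{n+1} = b`. -/
def rightFixedBC {n : ℕ} (hn : 0 < n) (f : Rule) (b : Q) : Config n → Config n :=
  fun x => caTrans f (firstCell hn x) b x

/-- Free boundary `*-*` : `x₀ = x₁`, `x_{n+1} = xₙ`. -/
def freeBC {n : ℕ} (hn : 0 < n) (f : Rule) : Config n → Config n :=
  fun x => caTrans f (firstCell hn x) (lastCell hn x) x

/-- Cyclic boundary `*` : `x₀ = xₙ`, `x_{n+1} = x₁`. -/
def cyclicBC {n : ℕ} (hn : 0 < n) (f : Rule) : Config n → Config n :=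
  fun x => caTrans f (lastCell hn x) (firstCell hn x) x

/-- Rule 90 : `f(a,b,c) = a + c`. -/
def f90 : Rule := fun a _ c => a + c

theorem statement10 (n : ℕ) (hn : 1 ≤ n) :
    ¬ Function.Bijective (freeBC hn f90) ∧ ¬ Function.Bijective (cyclicBC hn f90) := by
  have hne : (fun _ => 1 : Config n) ≠ (fun _ => 0) := by
    intro h
    have := congrFun h ⟨0, hn⟩
    simp at this
  have hc : ∀ (a : Q), caTrans (n := n) f90 a a (fun _ => a) = fun _ => 0 := by
    intro a; funext i
    simp only [caTrans, f90]
    split_ifs <;> show a + a = 0 <;> linear_combination a * (by decide : (2 : Q) = 0)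
  have key : ∀ (g : Config n → Config n),
      (∀ a : Q, g (fun _ => a) = fun _ => 0) → ¬ Function.Bijective g := by
    intro g hg hb
    exact hne (hb.1 ((hg 1).trans (hg 0).symm))
  refine ⟨key _ ?_, key _ ?_⟩ <;>
    intro a <;>
    simp only [freeBC, cyclicBC, firstCell, lastCell] <;>
    exact hc a
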